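/- Let T be a rooted tree and K ⊆ R(T) a compact subset of the ray space. Let T_K = ⋃K be the subtree of T consisting of all nodes lying on some ray in K. Then every node of T_K has only finitely many immediate successors in T_K, and consequently R(T_K) is compact. -/

import Mathlib

open Set Topology

/-- An order-theoretic tree: every set of predecessors is a well-ordered chain. -/
def IsOrderTree (T : Type*) [PartialOrder T] : Prop :=
  ∀ t : T, (Set.Iio t).IsWF ∧ IsChain (· ≤ ·) (Set.Iio t)

/-- A ray: a nonempty, downward closed chain with no maximal element. -/
def IsRay {T : Type*} [PartialOrder T] (R : Set T) : Prop :=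
  R.Nonempty ∧ IsChain (· ≤ ·) R ∧ (∀ x ∈ R, ∀ y, y ≤ x → y ∈ R) ∧
    ∀ x ∈ R, ∃ y ∈ R, x < y

/-- The ray space of a tree. -/
def RaySpace (T : Type*) [PartialOrder T] := {R : Set T // IsRay R}

/-- The topology on the ray space, inherited from the product topology on `2^T`:
subbasic open sets are `[t] = {R : t ∈ R}` and their complements. -/
instance {T : Type*} [PartialOrder T] : TopologicalSpace (RaySpace T) :=
  TopologicalSpace.generateFrom
    {U | ∃ t : T, U = {R : RaySpace T | t ∈ R.val} ∨ U = {R : RaySpace T | t ∉ R.val}}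

/-- If `K` is a compact subset of the ray space of a rooted tree `T`, and
`T_K = ⋃ K` is the subtree of all nodes lying on some ray in `K`, then every node of
`T_K` has only finitely many immediate successors in `T_K`, and the ray space
`R(T_K) = {R ∈ R(T) | R ⊆ T_K}` is compact. -/
theorem rayspace_of_union_of_compact {T : Type*} [PartialOrder T]
    (htree : IsOrderTree T) (r : T) (hroot : ∀ t : T, r ≤ t)
    (K : Set (RaySpace T)) (hK : IsCompact K) :
    (∀ t ∈ ⋃ x ∈ K, (x : RaySpace T).val,
      {s ∈ ⋃ x ∈ K, (x : RaySpace T).val |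
        t < s ∧ ∀ u ∈ ⋃ x ∈ K, (x : RaySpace T).val, t < u → ¬ u < s}.Finite) ∧
    IsCompact {R : RaySpace T | R.val ⊆ ⋃ x ∈ K, (x : RaySpace T).val} := by
  classical
  set TK : Set T := ⋃ x ∈ K, (x : RaySpace T).val with hTKdef
  have hopen : ∀ s : T, IsOpen {R : RaySpace T | s ∈ R.val} := fun s =>
    TopologicalSpace.isOpen_generateFrom_of_mem ⟨s, Or.inl rfl⟩
  have hopenc : ∀ s : T, IsOpen {R : RaySpace T | s ∉ R.val} := fun s =>
    TopologicalSpace.isOpen_generateFrom_of_mem ⟨s, Or.inr rfl⟩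
  have hclosed : ∀ s : T, IsClosed {R : RaySpace T | s ∈ R.val} := by
    intro s
    have h : {R : RaySpace T | s ∈ R.val} = {R : RaySpace T | s ∉ R.val}ᶜ := by
      ext R; simp
    rw [h]
    exact (hopenc s).isClosed_compl
  -- key helper: any ray inside TK containing t contains an immediate successor of t in TK
  have hsucc : ∀ (t : T) (R : RaySpace T), R.val ⊆ TK → t ∈ R.val →
      ∃ s ∈ {s ∈ TK | t < s ∧ ∀ u ∈ TK, t < u → ¬ u < s}, s ∈ R.val := by
    intro t R hsub ht
    obtain ⟨hne, hchain, hdc, hnomax⟩ := R.property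
    obtain ⟨y, hyR, hty⟩ := hnomax t ht
    have hAwf : {u : T | t < u ∧ u ≤ y}.IsWF := by
      refine (((htree y).1).insert y).mono ?_
      intro u hu
      rcases lt_or_eq_of_le hu.2 with h | h
      · exact Set.mem_insert_iff.mpr (Or.inr h)
      · exact Set.mem_insert_iff.mpr (Or.inl h)
    have hAne : {u : T | t < u ∧ u ≤ y}.Nonempty := ⟨y, hty, le_refl y⟩
    set m := hAwf.min hAne with hm
    have hmA : m ∈ {u : T | t < u ∧ u ≤ y} := hAwf.min_mem hAne
    have hmR : m ∈ R.val := hdc y hyR m hmA.2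
    refine ⟨m, ⟨hsub hmR, hmA.1, ?_⟩, hmR⟩
    intro u _ htu hum
    exact hAwf.not_lt_min hAne ⟨htu, hum.le.trans hmA.2⟩ hum
  -- Part 1: finitely many immediate successors
  have hfin : ∀ t ∈ TK, {s ∈ TK | t < s ∧ ∀ u ∈ TK, t < u → ¬ u < s}.Finite := by
    intro t _
    set S := {s ∈ TK | t < s ∧ ∀ u ∈ TK, t < u → ¬ u < s} with hS
    have hKt : IsCompact (K ∩ {R : RaySpace T | t ∈ R.val}) := hK.inter_right (hclosed t)
    have hcover : K ∩ {R : RaySpace T | t ∈ R.val} ⊆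
        ⋃ s : S, {R : RaySpace T | (s : T) ∈ R.val} := by
      rintro R ⟨hRK, htR⟩
      have hsub : R.val ⊆ TK := fun u hu => Set.mem_biUnion hRK hu
      obtain ⟨s, hsS, hsR⟩ := hsucc t R hsub htR
      exact Set.mem_iUnion.mpr ⟨⟨s, hsS⟩, hsR⟩
    obtain ⟨F, hF⟩ := hKt.elim_finite_subcover
      (fun s : S => {R : RaySpace T | (s : T) ∈ R.val}) (fun s => hopen s) hcover
    refine Set.Finite.subset (F.image (fun s : S => (s : T))).finite_toSet ?_
    intro s hsS
    obtain ⟨V, ⟨x, rfl⟩, hV⟩ := hsS.1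
    simp only [Set.mem_iUnion, Set.mem_range] at hV
    obtain ⟨hxK, hsx⟩ := hV
    have htx : t ∈ x.val := x.property.2.2.1 s hsx t hsS.2.1.le
    have hx2 : x ∈ ⋃ i ∈ F, {R : RaySpace T | (i : T) ∈ R.val} := hF ⟨hxK, htx⟩
    simp only [Set.mem_iUnion] at hx2
    obtain ⟨i, hiF, hix⟩ := hx2
    have heq : (i : T) = s := by
      by_contra hne
      rcases x.property.2.1 hix hsx (fun h => hne h) with h | h
      · rcases lt_or_eq_of_le h with h' | h'
        · exact hsS.2.2 i i.2.1 i.2.2.1 h'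
        · exact hne h'
      · rcases lt_or_eq_of_le h with h' | h'
        · exact i.2.2.2 s hsS.1 hsS.2.1 h'
        · exact hne h'.symm
    have : s ∈ F.image (fun s : S => (s : T)) :=
      Finset.mem_image.mpr ⟨i, hiF, heq⟩
    exact Finset.mem_coe.mpr this
  refine ⟨hfin, ?_⟩
  -- Part 2: compactness via ultrafilters
  rw [isCompact_iff_ultrafilter_le_nhds]
  intro f hf
  have hspace : {R : RaySpace T | R.val ⊆ TK} ∈ f := by
    exact hf (Filter.mem_principal_self _)
  have hrmem : ∀ R : RaySpace T, r ∈ R.val := by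
    intro R
    obtain ⟨⟨x, hx⟩, _, hdc, _⟩ := R.property
    exact hdc x hx r (hroot x)
  set L : Set T := {t : T | {R : RaySpace T | t ∈ R.val} ∈ f} with hLdef
  have hLdc : ∀ x ∈ L, ∀ y, y ≤ x → y ∈ L := by
    intro x hx y hyx
    exact Filter.mem_of_superset hx (fun R hR => R.property.2.2.1 x hR y hyx)
  have hLTK : L ⊆ TK := by
    intro s hs
    obtain ⟨R, hsR, hRT⟩ := Ultrafilter.nonempty_of_mem (Filter.inter_mem hs hspace)
    exact hRT hsR
  have hray : IsRay L := by
    refine ⟨⟨r, ?_⟩, ?_, hLdc, ?_⟩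
    · exact Filter.mem_of_superset Filter.univ_mem (fun R _ => hrmem R)
    · intro a ha b hb hab
      obtain ⟨R, haR, hbR⟩ := Ultrafilter.nonempty_of_mem (Filter.inter_mem ha hb)
      exact R.property.2.1 haR hbR hab
    · intro t ht
      have htTK : t ∈ TK := hLTK ht
      have hmem : (⋃ s ∈ {s ∈ TK | t < s ∧ ∀ u ∈ TK, t < u → ¬ u < s},
          {R : RaySpace T | s ∈ R.val}) ∈ f := by
        refine Filter.mem_of_superset (Filter.inter_mem ht hspace) ?_
        rintro R ⟨htR, hRT⟩
        obtain ⟨s, hsS, hsR⟩ := hsucc t R hRT htR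
        exact Set.mem_biUnion hsS hsR
      obtain ⟨s, hsS, hsf⟩ := (Ultrafilter.finite_biUnion_mem_iff (hfin t htTK)).mp hmem
      exact ⟨s, hsf, hsS.2.1⟩
  refine ⟨⟨L, hray⟩, hLTK, ?_⟩
  have key : ∀ U : Set (RaySpace T),
      TopologicalSpace.GenerateOpen
        {U | ∃ t : T, U = {R : RaySpace T | t ∈ R.val} ∨ U = {R : RaySpace T | t ∉ R.val}} U →
      (⟨L, hray⟩ : RaySpace T) ∈ U → U ∈ f := by
    intro U hU
    induction hU with
    | basic V hV =>
      intro h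
      obtain ⟨t, rfl | rfl⟩ := hV
      · exact h
      · exact Ultrafilter.compl_mem_iff_notMem.mpr h
    | univ => exact fun _ => Filter.univ_mem
    | inter V W _ _ ihV ihW => exact fun h => Filter.inter_mem (ihV h.1) (ihW h.2)
    | sUnion S _ ih =>
      rintro ⟨V, hVS, hV⟩
      exact Filter.mem_of_superset (ih V hVS hV) (Set.subset_sUnion_of_mem hVS)
  apply le_nhds_iff.mpr
  intro U hLU hU
  exact key U hU hLU
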